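/- Let p be a prime. There exists a subset A of Z_{p²+p+1} and hence, for any m with (p²+p+1) < m < 2(p²+p+1), a subset B of Z_m with |B| ≤ 2(p+1) such that δ_B(n) ≥ 1 for all n ∈ Z_m. -/

import Mathlib

open Module Finset
set_option synthInstance.maxHeartbeats 1000000
set_option maxHeartbeats 2000000

namespace SingerAux

variable (p : ℕ) [Fact p.Prime]

local notation "K" => GaloisField p 3
local notation "N" => p ^ 2 + p + 1

lemma hp2 : 2 ≤ p := (Fact.out : p.Prime).two_le

lemma Nfact : (p ^ 3 - 1) = (p ^ 2 + p + 1) * (p - 1) := by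
  obtain ⟨q, rfl⟩ : ∃ q, p = q + 1 := ⟨p - 1, by have := hp2 p; omega⟩
  simp only [Nat.add_sub_cancel]
  have h1 : (q+1)^3 = q^3+3*q^2+3*q+1 := by ring
  have h2 : ((q+1)^2+(q+1)+1) * q = q^3+3*q^2+3*q := by ring
  omega

lemma Ndvd : (N : ℕ) ∣ p ^ 3 - 1 := ⟨p - 1, Nfact p⟩

instance : NeZero (p ^ 2 + p + 1) := ⟨by positivity⟩

noncomputable instance : Fintype K := Fintype.ofFinite _
noncomputable instance : Fintype Kˣ := Fintype.ofFinite _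

lemma cardK : Fintype.card K = p ^ 3 := by
  have := GaloisField.card p 3 (by norm_num)
  rwa [Nat.card_eq_fintype_card] at this

lemma cardKu : Fintype.card Kˣ = p ^ 3 - 1 := by
  rw [← Nat.card_eq_fintype_card, Nat.card_units, Nat.card_eq_fintype_card, cardK]

/-- a generator of the unit group -/
noncomputable def gen : Kˣ := (IsCyclic.exists_generator (α := Kˣ)).choose

lemma gen_spec (x : Kˣ) : x ∈ Subgroup.zpowers (gen p) :=
  (IsCyclic.exists_generator (α := Kˣ)).choose_spec x

lemma orderOf_gen : orderOf (gen p) = p ^ 3 - 1 := by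
  have := orderOf_eq_card_of_forall_mem_zpowers (gen_spec p)
  rwa [Nat.card_eq_fintype_card, cardKu] at this

/-- discrete logarithm -/
noncomputable def lg (x : Kˣ) : ℤ :=
  ((Subgroup.mem_zpowers_iff).mp (gen_spec p x)).choose

lemma gen_pow_lg (x : Kˣ) : gen p ^ lg p x = x :=
  ((Subgroup.mem_zpowers_iff).mp (gen_spec p x)).choose_spec

noncomputable def ψ (x : Kˣ) : ZMod N := ((lg p x : ℤ) : ZMod N)

lemma psi_wd {a b : ℤ} (h : gen p ^ a = gen p ^ b) : ((a : ZMod N)) = ((b : ZMod N)) := by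
  have h1 : gen p ^ (a - b) = 1 := by
    rw [zpow_sub, h]; group
  have h2 : ((p ^ 3 - 1 : ℕ) : ℤ) ∣ (a - b) := by
    rw [← orderOf_gen p]; exact orderOf_dvd_iff_zpow_eq_one.mpr h1
  have h3 : ((p ^ 2 + p + 1 : ℕ) : ℤ) ∣ (a - b) :=
    dvd_trans (Int.natCast_dvd_natCast.mpr (Ndvd p)) h2
  have h4 := (ZMod.intCast_zmod_eq_zero_iff_dvd (a - b) (p ^ 2 + p + 1)).mpr h3
  push_cast at h4
  exact sub_eq_zero.mp h4

lemma psi_mul (x y : Kˣ) : ψ p (x * y) = ψ p x + ψ p y := by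
  have h : gen p ^ (lg p (x * y)) = gen p ^ (lg p x + lg p y) := by
    rw [zpow_add, gen_pow_lg, gen_pow_lg, gen_pow_lg]
  have := psi_wd p h
  unfold ψ
  rw [this]; push_cast; ring

lemma psi_one : ψ p 1 = 0 := by
  have h : gen p ^ (lg p 1) = gen p ^ (0 : ℤ) := by
    rw [gen_pow_lg, zpow_zero]
  have := psi_wd p h
  unfold ψ
  rw [this]; push_cast; ring

lemma psi_inv (x : Kˣ) : ψ p x⁻¹ = - ψ p x := by
  have h := psi_mul p x x⁻¹
  rw [mul_inv_cancel, psi_one] at h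
  linear_combination -h

lemma psi_gen_zpow (k : ℤ) : ψ p (gen p ^ k) = (k : ZMod N) := by
  have h : gen p ^ (lg p (gen p ^ k)) = gen p ^ k := gen_pow_lg p _
  exact psi_wd p h

lemma psi_surj : Function.Surjective (ψ p) := by
  intro n
  refine ⟨gen p ^ ((n.val : ℤ)), ?_⟩
  rw [psi_gen_zpow]
  push_cast
  simp [ZMod.natCast_val, ZMod.cast_id]

lemma pow_p_iff (x : K) : x ^ p = x ↔ x ∈ Set.range (algebraMap (ZMod p) K) := by
  classical
  constructor
  · intro hx
    set Φ : Finset K := Finset.univ.filter (fun z : K => z ^ p = z) with hΦ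
    have hinj : Function.Injective (algebraMap (ZMod p) K) := (algebraMap (ZMod p) K).injective
    have hsub : (Finset.univ.image (algebraMap (ZMod p) K)) ⊆ Φ := by
      intro z hz
      simp only [Finset.mem_image, Finset.mem_univ, true_and] at hz
      obtain ⟨r, rfl⟩ := hz
      simp only [hΦ, Finset.mem_filter, Finset.mem_univ, true_and]
      rw [← map_pow, ZMod.pow_card]
    have hcard1 : (Finset.univ.image (algebraMap (ZMod p) K)).card = p := by
      rw [Finset.card_image_of_injective _ hinj, Finset.card_univ, ZMod.card]
    have hcard2 : Φ.card ≤ p := by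
      set Q : Polynomial K := Polynomial.X ^ p - Polynomial.X with hQ
      have hp2 := hp2 p
      have hQne : Q ≠ 0 := by
        intro hc
        have : Q.coeff p = 1 := by
          simp [hQ, Polynomial.coeff_X_pow, Polynomial.coeff_X]
          omega
        rw [hc] at this
        simp at this
      have hdeg : Q.natDegree ≤ p := by
        refine le_trans (Polynomial.natDegree_sub_le _ _) ?_
        simp [Polynomial.natDegree_X_pow]
        omega
      have hsub2 : Φ ⊆ Q.roots.toFinset := by
        intro z hz
        simp only [hΦ, Finset.mem_filter, Finset.mem_univ, true_and] at hz
        rw [Multiset.mem_toFinset, Polynomial.mem_roots hQne]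
        simp [hQ, Polynomial.IsRoot, sub_eq_zero, hz]
      refine le_trans (Finset.card_le_card hsub2) ?_
      refine le_trans (Multiset.toFinset_card_le _) (le_trans (Polynomial.card_roots' Q) hdeg)
    have heq : Finset.univ.image (algebraMap (ZMod p) K) = Φ :=
      Finset.eq_of_subset_of_card_le hsub (by rw [hcard1]; exact hcard2)
    have hx' : x ∈ Φ := by simp [hΦ, hx]
    rw [← heq] at hx'
    simp only [Finset.mem_image, Finset.mem_univ, true_and] at hx'
    exact hx'
  · rintro ⟨r, rfl⟩
    rw [← map_pow, ZMod.pow_card]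

lemma psi_eq_zero_iff (u : Kˣ) : ψ p u = 0 ↔ (u : K) ∈ Set.range (algebraMap (ZMod p) K) := by
  have hp2 := hp2 p
  rw [← pow_p_iff]
  have h0 : ψ p u = 0 ↔ ((p ^ 2 + p + 1 : ℕ) : ℤ) ∣ lg p u :=
    ZMod.intCast_zmod_eq_zero_iff_dvd _ _
  have key2 : u ^ (p - 1) = 1 ↔ ((p ^ 2 + p + 1 : ℕ) : ℤ) ∣ lg p u := by
    conv_lhs => rw [← gen_pow_lg p u]
    rw [← zpow_natCast, ← zpow_mul, ← orderOf_dvd_iff_zpow_eq_one, orderOf_gen, Nfact]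
    have hne : ((p - 1 : ℕ) : ℤ) ≠ 0 := by
      have : 1 ≤ p - 1 := by omega
      exact_mod_cast by positivity
    push_cast
    rw [mul_dvd_mul_iff_right hne]
  have key : (u : K) ^ p = (u : K) ↔ u ^ (p - 1) = 1 := by
    constructor
    · intro h
      ext
      rw [Units.val_pow_eq_pow_val, Units.val_one]
      have hu : (u : K) ≠ 0 := Units.ne_zero u
      have hp' : (u : K) ^ ((p - 1) + 1) = (u : K) := by
        rw [(by omega : p - 1 + 1 = p)]; exact h
      rw [pow_succ] at hp'
      field_simp at hp'
      exact hp'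
    · intro h
      have : (u : K) ^ (p - 1) = 1 := by
        rw [← Units.val_pow_eq_pow_val, h, Units.val_one]
      calc (u : K) ^ p = (u : K) ^ (p - 1) * (u : K) := by
            rw [← pow_succ, (by omega : p - 1 + 1 = p)]
        _ = (u : K) := by rw [this, one_mul]
  rw [h0, key, key2]

lemma finrankK : finrank (ZMod p) K = 3 := GaloisField.finrank p (by norm_num)

/-- the hyperplane -/
noncomputable def H : Submodule (ZMod p) K :=
  LinearMap.ker ((finBasis (ZMod p) K).coord ⟨0, by rw [finrankK]; norm_num⟩)

lemma finrank_ker_coord (i : Fin (finrank (ZMod p) K)) :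
    finrank (ZMod p) (LinearMap.ker ((finBasis (ZMod p) K).coord i)) = 2 := by
  have hs : Function.Surjective ((finBasis (ZMod p) K).coord i) := by
    intro r
    refine ⟨r • finBasis (ZMod p) K i, ?_⟩
    simp
  have h := LinearMap.finrank_range_add_finrank_ker ((finBasis (ZMod p) K).coord i)
  rw [LinearMap.range_eq_top.mpr hs, finrank_top] at h
  simp only [finrank_self] at h
  have h3 := finrankK p
  omega

lemma finrank_H : finrank (ZMod p) (H p) = 2 := by
  unfold H
  exact finrank_ker_coord p _

/-- stabilizer lemma -/
lemma stab {c : K} (hc : ∀ v ∈ H p, c * v ∈ H p) : c ∈ Set.range (algebraMap (ZMod p) K) := by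
  classical
  set S : Subalgebra (ZMod p) K :=
    { carrier := {z | ∀ v ∈ H p, z * v ∈ H p}
      mul_mem' := by
        intro a b ha hb v hv
        rw [mul_assoc]
        exact ha _ (hb v hv)
      add_mem' := by
        intro a b ha hb v hv
        rw [add_mul]
        exact (H p).add_mem (ha v hv) (hb v hv)
      algebraMap_mem' := by
        intro r v hv
        rw [← Algebra.smul_def]
        exact (H p).smul_mem r hv } with hS
  have hcS : c ∈ S := hc
  have hH2 : finrank (ZMod p) (H p) = 2 := finrank_H p
  have hneb : (H p) ≠ ⊥ := by
    intro hb
    rw [hb] at hH2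
    simp [finrank_bot] at hH2
  obtain ⟨h0, hh0, hne0⟩ := Submodule.ne_bot_iff _ |>.mp hneb
  have hSne : S ≠ ⊤ := by
    intro hT
    have hall : ∀ z : K, z ∈ H p := by
      intro z
      have hz : (z * h0⁻¹) ∈ S := by rw [hT]; trivial
      have := hz h0 hh0
      rwa [mul_assoc, inv_mul_cancel₀ hne0, mul_one] at this
    have : H p = ⊤ := eq_top_iff.mpr (fun z _ => hall z)
    rw [this, finrank_top, finrankK] at hH2
    omega
  have : Fintype S := Fintype.ofFinite _
  letI : Field S := Fintype.fieldOfDomain S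
  have hmul := finrank_mul_finrank (ZMod p) S K
  rw [finrankK] at hmul
  have hdvd : finrank (ZMod p) S ∣ 3 := ⟨finrank S K, hmul.symm⟩
  have h13 := (Nat.prime_three).eq_one_or_self_of_dvd _ hdvd
  rcases h13 with h1 | h3
  · -- S = span {1}
    have hone : (1 : K) ∈ S := S.one_mem
    have hspan : Submodule.span (ZMod p) {(1 : K)} ≤ S.toSubmodule := by
      rw [Submodule.span_le]
      intro z hz
      rcases hz with rfl
      exact hone
    have hfr1 : finrank (ZMod p) (Submodule.span (ZMod p) {(1 : K)}) = 1 :=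
      finrank_span_singleton one_ne_zero
    have heq : Submodule.span (ZMod p) {(1 : K)} = S.toSubmodule :=
      Submodule.eq_of_le_of_finrank_le hspan (by rw [hfr1]; exact le_of_eq h1)
    have hcmem : c ∈ Submodule.span (ZMod p) {(1 : K)} := by
      rw [heq]; exact hcS
    rw [Submodule.mem_span_singleton] at hcmem
    obtain ⟨r, hr⟩ := hcmem
    exact ⟨r, by rw [← hr, Algebra.smul_def, mul_one]⟩
  · exfalso
    have hst : S.toSubmodule = ⊤ :=
      Submodule.eq_top_of_finrank_eq (by rw [finrankK]; exact h3)
    apply hSne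
    ext z
    simp only [Algebra.mem_top, iff_true]
    have : z ∈ S.toSubmodule := by rw [hst]; trivial
    exact this

noncomputable def W (c : K) : Submodule (ZMod p) K :=
  H p ⊓ (H p).comap (LinearMap.mulLeft (ZMod p) c)

noncomputable def mulE (c : K) (hc : c ≠ 0) : K ≃ₗ[ZMod p] K :=
  LinearEquiv.ofLinear (LinearMap.mulLeft (ZMod p) c) (LinearMap.mulLeft (ZMod p) c⁻¹)
    (by ext x; simp [hc]) (by ext x; simp [hc])

lemma finrank_W {c : K} (hc : c ∉ Set.range (algebraMap (ZMod p) K)) :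
    finrank (ZMod p) (W p c) = 1 := by
  have hc0 : c ≠ 0 := by
    rintro rfl
    exact hc ⟨0, by simp⟩
  set H' := (H p).comap (LinearMap.mulLeft (ZMod p) c) with hH'def
  have hH' : finrank (ZMod p) H' = 2 := by
    have h1 : H' = (H p).comap (mulE p c hc0 : K →ₗ[ZMod p] K) := rfl
    rw [h1, Submodule.comap_equiv_eq_map_symm, LinearEquiv.finrank_map_eq, finrank_H]
  have hsum := Submodule.finrank_sup_add_finrank_inf_eq (H p) H'
  have hle : finrank (ZMod p) ↥(H p ⊔ H') ≤ 3 := by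
    have h := Submodule.finrank_le (H p ⊔ H')
    rwa [finrankK] at h
  rw [finrank_H, hH'] at hsum
  have hWdef : W p c = H p ⊓ H' := rfl
  have hge : 1 ≤ finrank (ZMod p) (W p c) := by rw [hWdef]; omega
  by_contra hne1
  have hleH : W p c ≤ H p := inf_le_left
  have hle2 : finrank (ZMod p) (W p c) ≤ 2 := by
    rw [← finrank_H p]
    exact Submodule.finrank_mono hleH
  have h2 : finrank (ZMod p) (W p c) = 2 := by omega
  have hWH : W p c = H p :=
    Submodule.eq_of_le_of_finrank_le hleH (by rw [finrank_H, h2])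
  have hstab : ∀ v ∈ H p, c * v ∈ H p := by
    intro v hv
    have hvW : v ∈ W p c := by rw [hWH]; exact hv
    exact hvW.2
  exact hc (stab p hstab)

lemma W_exists {c : K} (hc : c ∉ Set.range (algebraMap (ZMod p) K)) :
    ∃ w ∈ W p c, w ≠ 0 := by
  rw [← Submodule.ne_bot_iff]
  intro hb
  have := finrank_W p hc
  rw [hb] at this
  simp [finrank_bot] at this

lemma W_unique {c : K} (hc : c ∉ Set.range (algebraMap (ZMod p) K))
    {v v' : K} (hv : v ∈ W p c) (hv' : v' ∈ W p c) (h0 : v ≠ 0) :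
    ∃ r : ZMod p, v' = r • v := by
  have hspan : Submodule.span (ZMod p) {v} ≤ W p c := by
    rw [Submodule.span_le]
    intro z hz
    rcases hz with rfl
    exact hv
  have hfr1 : finrank (ZMod p) (Submodule.span (ZMod p) {v}) = 1 :=
    finrank_span_singleton h0
  have heq : Submodule.span (ZMod p) {v} = W p c :=
    Submodule.eq_of_le_of_finrank_le hspan (by rw [hfr1, finrank_W p hc])
  have : v' ∈ Submodule.span (ZMod p) {v} := by rw [heq]; exact hv'
  rw [Submodule.mem_span_singleton] at this
  obtain ⟨r, hr⟩ := this
  exact ⟨r, hr.symm⟩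

open scoped Classical in
noncomputable def A : Finset (ZMod N) :=
  Finset.image (ψ p) (Finset.univ.filter (fun u : Kˣ => (u : K) ∈ H p))

lemma mem_A {a : ZMod N} :
    a ∈ A p ↔ ∃ u : Kˣ, (u : K) ∈ H p ∧ ψ p u = a := by
  classical
  unfold A
  simp only [Finset.mem_image, Finset.mem_filter, Finset.mem_univ, true_and]

theorem A_perfect (n : ZMod N) (hn : n ≠ 0) :
    (((A p) ×ˢ (A p)).filter (fun q => q.1 - q.2 = n)).card = 1 := by
  classical
  obtain ⟨c, hc⟩ := psi_surj p n
  have hcnot : (c : K) ∉ Set.range (algebraMap (ZMod p) K) := by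
    intro hr
    exact hn (hc ▸ (psi_eq_zero_iff p c).mpr hr)
  obtain ⟨w, hwW, hw0⟩ := W_exists p hcnot
  set y : Kˣ := Units.mk0 w hw0 with hy
  set x : Kˣ := c * y with hx
  have hyval : (y : K) = w := rfl
  have hxval : (x : K) = (c : K) * w := rfl
  have hxH : (x : K) ∈ H p := by
    have h2 := hwW.2
    rw [hxval]; simpa using h2
  have hyH : (y : K) ∈ H p := hwW.1
  have hxy : ψ p x - ψ p y = n := by
    rw [hx, psi_mul, hc]; ring
  rw [Finset.card_eq_one]
  refine ⟨(ψ p x, ψ p y), ?_⟩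
  ext q
  simp only [Finset.mem_filter, Finset.mem_product, Finset.mem_singleton]
  constructor
  · rintro ⟨⟨hq1, hq2⟩, hqd⟩
    rw [mem_A] at hq1 hq2
    obtain ⟨x', hx'H, hx'⟩ := hq1
    obtain ⟨y', hy'H, hy'⟩ := hq2
    have hd : ψ p x' - ψ p y' = n := by rw [hx', hy']; exact hqd
    have h0 : ψ p (x' * y'⁻¹ * c⁻¹) = 0 := by
      rw [psi_mul, psi_mul, psi_inv, psi_inv, hc]
      linear_combination hd
    obtain ⟨lr, hlr⟩ := (psi_eq_zero_iff p _).mp h0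
    have hlr0 : lr ≠ 0 := by
      intro hz
      rw [hz, map_zero] at hlr
      exact (Units.ne_zero _) hlr.symm
    set au : Kˣ := Units.mk0 (algebraMap (ZMod p) K lr) ((map_ne_zero _).mpr hlr0) with hau
    have hau' : x' * y'⁻¹ * c⁻¹ = au := Units.ext hlr.symm
    have hx'eq : x' = au * c * y' := by
      rw [← hau']; group
    have hcy : (c : K) * (y' : K) ∈ H p := by
      have hunit : c * y' = au⁻¹ * x' := by
        rw [hx'eq]; group
      have h1 : (c : K) * (y' : K) = (lr⁻¹ : ZMod p) • (x' : K) := by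
        calc (c : K) * (y' : K) = ((c * y' : Kˣ) : K) := (Units.val_mul _ _).symm
          _ = ((au⁻¹ * x' : Kˣ) : K) := by rw [hunit]
          _ = ((au⁻¹ : Kˣ) : K) * (x' : K) := Units.val_mul _ _
          _ = (lr⁻¹ : ZMod p) • (x' : K) := by
              rw [Algebra.smul_def, map_inv₀, Units.val_inv_eq_inv_val]
              simp [hau]
      rw [h1]
      exact (H p).smul_mem _ hx'H
    have hy'W : (y' : K) ∈ W p (c : K) := ⟨hy'H, hcy⟩
    have hyW : (w : K) ∈ W p (c : K) := hwW
    obtain ⟨r, hr⟩ := W_unique p hcnot hyW hy'W hw0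
    have hr0 : r ≠ 0 := by
      rintro rfl
      rw [zero_smul] at hr
      exact (Units.ne_zero y') hr
    set ru : Kˣ := Units.mk0 (algebraMap (ZMod p) K r) ((map_ne_zero _).mpr hr0) with hru
    have hy'eq : y' = ru * y := by
      apply Units.ext
      rw [Units.val_mul, hr, Algebra.smul_def]
      rfl
    have hyy : ψ p y' = ψ p y := by
      rw [hy'eq, psi_mul, (psi_eq_zero_iff p ru).mpr ⟨r, rfl⟩, zero_add]
    have hxx : ψ p x' = ψ p x := by
      have h1 : ψ p x' = n + ψ p y' := by linear_combination hd
      have h2 : ψ p x = n + ψ p y := by linear_combination hxy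
      rw [h1, h2, hyy]
    have : q = (q.1, q.2) := rfl
    rw [this, ← hx', ← hy', hxx, hyy]
  · rintro rfl
    exact ⟨⟨(mem_A p).mpr ⟨x, hxH, rfl⟩, (mem_A p).mpr ⟨y, hyH, rfl⟩⟩, hxy⟩

end SingerAux

lemma transfer (p m : ℕ) (hp : 2 ≤ p) (A : Finset (ZMod (p ^ 2 + p + 1)))
    (hA : ∀ n : ZMod (p ^ 2 + p + 1), n ≠ 0 →
      ((A ×ˢ A).filter (fun q => q.1 - q.2 = n)).card = 1)
    (h1 : p ^ 2 + p + 1 < m) (h2 : m < 2 * (p ^ 2 + p + 1)) :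
    ∃ B : Finset (ZMod m), B.card ≤ 2 * (p + 1) ∧
      ∀ n : ZMod m, 1 ≤ ((B ×ˢ B).filter (fun q => q.1 - q.2 = n)).card := by
  classical
  haveI : NeZero m := ⟨by omega⟩
  haveI : NeZero (p ^ 2 + p + 1) := ⟨by positivity⟩
  haveI : Fact (1 < p ^ 2 + p + 1) := ⟨by nlinarith⟩
  have hN7 : 7 ≤ p ^ 2 + p + 1 := by nlinarith
  -- A is nonempty
  have getpair : ∀ u : ZMod (p ^ 2 + p + 1), u ≠ 0 → ∃ a ∈ A, ∃ b ∈ A, a - b = u := by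
    intro u hu
    have h := hA u hu
    rw [Finset.card_eq_one] at h
    obtain ⟨q, hq⟩ := h
    have hqm : q ∈ (A ×ˢ A).filter (fun q => q.1 - q.2 = u) := hq ▸ Finset.mem_singleton_self q
    rw [Finset.mem_filter, Finset.mem_product] at hqm
    exact ⟨q.1, hqm.1.1, q.2, hqm.1.2, hqm.2⟩
  have hAne : A.Nonempty := by
    obtain ⟨a, ha, -⟩ := getpair 1 one_ne_zero
    exact ⟨a, ha⟩
  -- cardinality of A
  have hAcard : A.card ≤ p + 1 := by
    have hfib := Finset.card_eq_sum_card_fiberwise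
      (f := fun q : ZMod (p ^ 2 + p + 1) × ZMod (p ^ 2 + p + 1) => q.1 - q.2)
      (s := A ×ˢ A) (t := Finset.univ) (fun q _ => Finset.mem_univ _)
    rw [← Finset.sum_erase_add _ _ (Finset.mem_univ (0 : ZMod (p ^ 2 + p + 1)))] at hfib
    have hsum1 : ∑ n ∈ Finset.univ.erase (0 : ZMod (p ^ 2 + p + 1)),
        ((A ×ˢ A).filter (fun q => q.1 - q.2 = n)).card = p ^ 2 + p := by
      rw [Finset.sum_congr rfl (fun n hn => hA n (Finset.ne_of_mem_erase hn))]
      simp only [Finset.sum_const, smul_eq_mul, mul_one,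
        Finset.card_erase_of_mem (Finset.mem_univ _), Finset.card_univ, ZMod.card]
      omega
    have hdiag : ((A ×ˢ A).filter (fun q => q.1 - q.2 = 0)).card = A.card := by
      have heq : (A ×ˢ A).filter (fun q => q.1 - q.2 = 0) = A.image (fun a => (a, a)) := by
        ext ⟨q1, q2⟩
        simp only [Finset.mem_filter, Finset.mem_product, Finset.mem_image, sub_eq_zero,
          Prod.mk.injEq]
        constructor
        · rintro ⟨⟨h1, h2⟩, rfl⟩
          exact ⟨q1, h1, rfl, rfl⟩
        · rintro ⟨a, ha, rfl, rfl⟩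
          exact ⟨⟨ha, ha⟩, rfl⟩
      rw [heq, Finset.card_image_of_injective]
      intro a b h
      exact (Prod.mk.injEq _ _ _ _).mp h |>.1
    rw [Finset.card_product, hsum1, hdiag] at hfib
    by_contra hcon
    push_neg at hcon
    nlinarith
  -- build B
  set r : ℕ := m - (p ^ 2 + p + 1) with hr
  set L : ZMod (p ^ 2 + p + 1) → ZMod m := fun a => ((a.val : ℕ) : ZMod m) with hL
  set B : Finset (ZMod m) := (A.image L) ∪ (A.image (fun a => L a + (r : ZMod m))) with hB
  refine ⟨B, ?_, ?_⟩
  · calc B.card ≤ (A.image L).card + (A.image (fun a => L a + (r : ZMod m))).card :=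
        Finset.card_union_le _ _
      _ ≤ A.card + A.card := add_le_add (Finset.card_image_le) (Finset.card_image_le)
      _ ≤ 2 * (p + 1) := by omega
  · intro t
    rw [Nat.one_le_iff_ne_zero, ← Nat.pos_iff_ne_zero, Finset.card_pos]
    have hmem1 : ∀ a ∈ A, L a ∈ B := fun a ha =>
      Finset.mem_union_left _ (Finset.mem_image_of_mem _ ha)
    have hmem2 : ∀ a ∈ A, L a + (r : ZMod m) ∈ B := fun a ha =>
      Finset.mem_union_right _ (Finset.mem_image_of_mem _ ha)
    have dichot : ∀ (u a b : ZMod (p ^ 2 + p + 1)), a - b = u →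
        (a.val : ℤ) - b.val = u.val ∨ (a.val : ℤ) - b.val = (u.val : ℤ) - (p ^ 2 + p + 1 : ℕ) := by
      intro u a b hab
      have hc : ((p ^ 2 + p + 1 : ℕ) : ℤ) ∣ ((a.val : ℤ) - b.val - u.val) := by
        have hcast : (Int.cast ((a.val : ℤ) - b.val - u.val) : ZMod (p ^ 2 + p + 1)) = 0 := by
          push_cast
          simp only [ZMod.natCast_val, ZMod.cast_id]
          linear_combination hab
        exact (ZMod.intCast_zmod_eq_zero_iff_dvd _ _).mp hcast
      obtain ⟨k, hk⟩ := hc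
      have hav := ZMod.val_lt a
      have hbv := ZMod.val_lt b
      have huv := ZMod.val_lt u
      have hav' : ((a.val : ℤ)) < ((p ^ 2 + p + 1 : ℕ) : ℤ) := by exact_mod_cast hav
      have hbv' : ((b.val : ℤ)) < ((p ^ 2 + p + 1 : ℕ) : ℤ) := by exact_mod_cast hbv
      have huv' : ((u.val : ℤ)) < ((p ^ 2 + p + 1 : ℕ) : ℤ) := by exact_mod_cast huv
      have hNpos : (0 : ℤ) < ((p ^ 2 + p + 1 : ℕ) : ℤ) := by positivity
      have hk1 : k < 1 := by
        nlinarith [Int.natCast_nonneg a.val, Int.natCast_nonneg b.val, Int.natCast_nonneg u.val]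
      have hk2 : -2 < k := by
        nlinarith [Int.natCast_nonneg a.val, Int.natCast_nonneg b.val, Int.natCast_nonneg u.val]
      have hk0 : k = 0 ∨ k = -1 := by omega
      rcases hk0 with rfl | rfl
      · left; omega
      · right; omega
    set T : ℕ := t.val with hT
    have hTm : T < m := ZMod.val_lt t
    have ht : (Int.cast (T : ℤ) : ZMod m) = t := by
      push_cast
      simp [hT, ZMod.natCast_val, ZMod.cast_id]
    have step : ∀ (x y : ℤ), (x = y ∨ x = y - m) →
        ((Int.cast x : ZMod m) = (Int.cast y : ZMod m)) := by
      intro x y hxy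
      rcases hxy with rfl | rfl
      · rfl
      · push_cast
        simp [ZMod.natCast_self]
    have hrZ : ((r : ℕ) : ℤ) = (m : ℤ) - ((p ^ 2 + p + 1 : ℕ) : ℤ) := by
      rw [hr]
      push_cast [Nat.cast_sub (le_of_lt h1)]
      ring
    have hrlt : r < p ^ 2 + p + 1 := by omega
    by_cases hTN : T < p ^ 2 + p + 1
    · by_cases hT0 : T = 0
      · obtain ⟨a, ha⟩ := hAne
        refine ⟨(L a, L a), Finset.mem_filter.mpr
          ⟨Finset.mem_product.mpr ⟨hmem1 a ha, hmem1 a ha⟩, ?_⟩⟩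
        show L a - L a = t
        have ht0 : t = 0 := by
          rw [← ZMod.val_eq_zero]
          omega
        rw [ht0, sub_self]
      · set u : ZMod (p ^ 2 + p + 1) := ((T : ℕ) : ZMod (p ^ 2 + p + 1)) with hu
        have huval : u.val = T := ZMod.val_cast_of_lt hTN
        have hu0 : u ≠ 0 := by
          intro h
          rw [h, ZMod.val_zero] at huval
          exact hT0 huval.symm
        obtain ⟨a, ha, b, hb, hab⟩ := getpair u hu0
        rcases dichot u a b hab with hd | hd <;> rw [huval] at hd
        · refine ⟨(L a, L b), Finset.mem_filter.mpr
            ⟨Finset.mem_product.mpr ⟨hmem1 a ha, hmem1 b hb⟩, ?_⟩⟩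
          show L a - L b = t
          rw [← ht, hL]
          calc ((a.val : ℕ) : ZMod m) - ((b.val : ℕ) : ZMod m)
              = (Int.cast ((a.val : ℤ) - (b.val : ℤ)) : ZMod m) := by push_cast; ring
            _ = (Int.cast (T : ℤ) : ZMod m) := step _ _ (Or.inl (by omega))
        · refine ⟨(L a, L b + (r : ZMod m)), Finset.mem_filter.mpr
            ⟨Finset.mem_product.mpr ⟨hmem1 a ha, hmem2 b hb⟩, ?_⟩⟩
          show L a - (L b + (r : ZMod m)) = t
          rw [← ht, hL]
          calc ((a.val : ℕ) : ZMod m) - (((b.val : ℕ) : ZMod m) + ((r : ℕ) : ZMod m))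
              = (Int.cast ((a.val : ℤ) - ((b.val : ℤ) + (r : ℕ))) : ZMod m) := by push_cast; ring
            _ = (Int.cast (T : ℤ) : ZMod m) := step _ _ (Or.inr (by omega))
    · set u : ZMod (p ^ 2 + p + 1) := (((T - r : ℕ) : ℕ) : ZMod (p ^ 2 + p + 1)) with hu
      have hTrlt : T - r < p ^ 2 + p + 1 := by omega
      have huval : u.val = T - r := ZMod.val_cast_of_lt hTrlt
      have hu0 : u ≠ 0 := by
        intro h
        rw [h, ZMod.val_zero] at huval
        omega
      obtain ⟨a, ha, b, hb, hab⟩ := getpair u hu0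
      rcases dichot u a b hab with hd | hd <;> rw [huval] at hd
      · refine ⟨(L a + (r : ZMod m), L b), Finset.mem_filter.mpr
          ⟨Finset.mem_product.mpr ⟨hmem2 a ha, hmem1 b hb⟩, ?_⟩⟩
        show L a + (r : ZMod m) - L b = t
        rw [← ht, hL]
        calc ((a.val : ℕ) : ZMod m) + ((r : ℕ) : ZMod m) - ((b.val : ℕ) : ZMod m)
            = (Int.cast ((a.val : ℤ) + (r : ℕ) - (b.val : ℤ)) : ZMod m) := by push_cast; ring
          _ = (Int.cast (T : ℤ) : ZMod m) := step _ _ (Or.inl (by omega))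
      · refine ⟨(L a, L b), Finset.mem_filter.mpr
          ⟨Finset.mem_product.mpr ⟨hmem1 a ha, hmem1 b hb⟩, ?_⟩⟩
        show L a - L b = t
        rw [← ht, hL]
        calc ((a.val : ℕ) : ZMod m) - ((b.val : ℕ) : ZMod m)
            = (Int.cast ((a.val : ℤ) - (b.val : ℤ)) : ZMod m) := by push_cast; ring
          _ = (Int.cast (T : ℤ) : ZMod m) := step _ _ (Or.inr (by omega))

theorem singer_and_transfer (p : ℕ) (hp : p.Prime) :
    ∃ A : Finset (ZMod (p ^ 2 + p + 1)),
      (∀ n : ZMod (p ^ 2 + p + 1), n ≠ 0 →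
        ((A ×ˢ A).filter (fun q => q.1 - q.2 = n)).card = 1) ∧
      ∀ m : ℕ, p ^ 2 + p + 1 < m → m < 2 * (p ^ 2 + p + 1) →
        ∃ B : Finset (ZMod m), B.card ≤ 2 * (p + 1) ∧
          ∀ n : ZMod m, 1 ≤ ((B ×ˢ B).filter (fun q => q.1 - q.2 = n)).card := by
  haveI : Fact p.Prime := ⟨hp⟩
  exact ⟨SingerAux.A p, SingerAux.A_perfect p,
    fun m hm1 hm2 => transfer p m hp.two_le _ (SingerAux.A_perfect p) hm1 hm2⟩
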